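/- Let (R_t)_{t\ge 1} be real q\times q matrices converging to R^* with \|R^*\|_2 < 1, and let (b_t)_{t\ge 1} in \mathbb{R}^{q\times p} converge to b^*. Then any sequence (x_t)_{t\ge 1} of q\times p real matrices satisfying x_{t+1} = b_{t+1} + R_{t+1} x_t for all t \ge 1 converges, and its limit is x^* = (I_q - R^*)^{-1} b^* (the matrix I_q - R^* being invertible since \|R^*\|_2 < 1). -/

import Mathlib

open Matrix Filter Topology

/-- The operator 2-norm (largest singular value) of a real matrix. -/
noncomputable def opNorm2 {m n : Type*} [Fintype m] [Fintype n] [DecidableEq n]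
    (A : Matrix m n ℝ) : ℝ :=
  ‖LinearMap.toContinuousLinearMap (Matrix.toEuclideanLin (𝕜 := ℝ) A)‖

/-- The linear equivalence sending a matrix to its continuous linear map between
Euclidean spaces. -/
noncomputable def matCLM (q p : ℕ) :
    Matrix (Fin q) (Fin p) ℝ ≃ₗ[ℝ]
      (EuclideanSpace ℝ (Fin p) →L[ℝ] EuclideanSpace ℝ (Fin q)) :=
  (Matrix.toEuclideanLin (𝕜 := ℝ)).trans LinearMap.toContinuousLinearMap

lemma matCLM_norm {q p : ℕ} (A : Matrix (Fin q) (Fin p) ℝ) :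
    ‖matCLM q p A‖ = opNorm2 A := rfl

lemma matCLM_continuous (q p : ℕ) : Continuous (matCLM q p) :=
  (matCLM q p).toLinearMap.continuous_of_finiteDimensional

lemma matCLM_symm_continuous (q p : ℕ) : Continuous (matCLM q p).symm :=
  (matCLM q p).symm.toLinearMap.continuous_of_finiteDimensional

lemma matCLM_mul {q p : ℕ} (A : Matrix (Fin q) (Fin q) ℝ)
    (B : Matrix (Fin q) (Fin p) ℝ) :
    matCLM q p (A * B) = (matCLM q q A).comp (matCLM q p B) := by
  ext v
  simp [matCLM, Matrix.toEuclideanLin_apply, Matrix.mulVec_mulVec]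

lemma matCLM_one (q : ℕ) : matCLM q q 1 = 1 := by
  ext v
  simp [matCLM, Matrix.toEuclideanLin_apply]

/-- A nonnegative real sequence satisfying a contracting recursion with vanishing
perturbation converges to `0`. -/
lemma geom_decay {r : ℝ} (hr0 : 0 ≤ r) (hr1 : r < 1) (u ε : ℕ → ℝ)
    (hu : ∀ t, 0 ≤ u t) (hε : Tendsto ε atTop (𝓝 0))
    (hrec : ∀ᶠ t in atTop, u (t + 1) ≤ ε (t + 1) + r * u t) :
    Tendsto u atTop (𝓝 0) := by
  rw [Metric.tendsto_atTop]
  intro δ hδ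
  have h1r : 0 < 1 - r := by linarith
  set ε' : ℝ := δ * (1 - r) / 2 with hε'
  have hε'pos : 0 < ε' := by positivity
  obtain ⟨T1, hT1⟩ := (Metric.tendsto_atTop.mp hε) ε' hε'pos
  obtain ⟨T2, hT2⟩ := eventually_atTop.mp hrec
  set T := max T1 T2 with hT
  have key : ∀ k, u (T + k) ≤ r ^ k * u T + ε' * ∑ i ∈ Finset.range k, r ^ i := by
    intro k
    induction k with
    | zero => simp
    | succ k ih =>
      have hrec' : u (T + k + 1) ≤ ε (T + k + 1) + r * u (T + k) :=
        hT2 (T + k) (le_trans (le_max_right _ _) (Nat.le_add_right _ _))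
      have hεb : ε (T + k + 1) ≤ ε' := by
        have h := hT1 (T + k + 1) (by omega)
        rw [Real.dist_eq, sub_zero] at h
        exact (abs_lt.mp h).2.le
      have hmul : r * u (T + k) ≤ r * (r ^ k * u T + ε' * ∑ i ∈ Finset.range k, r ^ i) :=
        mul_le_mul_of_nonneg_left ih hr0
      have : u (T + (k + 1)) ≤ ε' + r * (r ^ k * u T + ε' * ∑ i ∈ Finset.range k, r ^ i) := by
        have : T + (k + 1) = T + k + 1 := by omega
        rw [this]
        linarith
      rw [geom_sum_succ]
      calc u (T + (k + 1)) ≤ ε' + r * (r ^ k * u T + ε' * ∑ i ∈ Finset.range k, r ^ i) := this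
        _ = r ^ (k + 1) * u T + ε' * (r * ∑ i ∈ Finset.range k, r ^ i + 1) := by ring
  have hgeom : ∀ k, ε' * ∑ i ∈ Finset.range k, r ^ i ≤ δ / 2 := by
    intro k
    have hgs : (∑ i ∈ Finset.range k, r ^ i) * (r - 1) = r ^ k - 1 := geom_sum_mul r k
    have hk : 0 ≤ r ^ k := pow_nonneg hr0 k
    have hsnn : 0 ≤ ∑ i ∈ Finset.range k, r ^ i :=
      Finset.sum_nonneg fun i _ => pow_nonneg hr0 i
    rw [hε']
    nlinarith
  have hpow : Tendsto (fun k => r ^ k * u T) atTop (𝓝 0) := by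
    simpa using (tendsto_pow_atTop_nhds_zero_of_lt_one hr0 hr1).mul_const (u T)
  obtain ⟨K, hK⟩ := (Metric.tendsto_atTop.mp hpow) (δ / 2) (by linarith)
  refine ⟨T + K, fun t ht => ?_⟩
  have hk : t = T + (t - T) := by omega
  have hkK : K ≤ t - T := by omega
  have h1 := key (t - T)
  have h2 := hK (t - T) hkK
  rw [Real.dist_eq, sub_zero] at h2
  have h2' : r ^ (t - T) * u T < δ / 2 := (abs_lt.mp h2).2
  have h3 := hgeom (t - T)
  rw [Real.dist_eq, sub_zero, abs_of_nonneg (hu t)]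
  rw [hk]
  linarith [h1]

/-- if `R t → R*` with `‖R*‖₂ < 1` and `b t → b*`, then any sequence of
`q × p` matrices with `x (t+1) = b (t+1) + R (t+1) * x t` converges to
`x* = (I - R*)⁻¹ b*`. -/
theorem perturbed_affine_matrix_recursion_converges {p q : ℕ}
    (R : ℕ → Matrix (Fin q) (Fin q) ℝ) (Rstar : Matrix (Fin q) (Fin q) ℝ)
    (hR : Tendsto R atTop (𝓝 Rstar)) (hnorm : opNorm2 Rstar < 1)
    (b : ℕ → Matrix (Fin q) (Fin p) ℝ) (bstar : Matrix (Fin q) (Fin p) ℝ)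
    (hb : Tendsto b atTop (𝓝 bstar))
    (x : ℕ → Matrix (Fin q) (Fin p) ℝ)
    (hx : ∀ t, 1 ≤ t → x (t + 1) = b (t + 1) + R (t + 1) * x t) :
    Tendsto x atTop (𝓝 ((1 - Rstar)⁻¹ * bstar)) := by
  set xstar : Matrix (Fin q) (Fin p) ℝ := (1 - Rstar)⁻¹ * bstar with hxstar
  -- invertibility of 1 - Rstar
  have hnormR : ‖matCLM q q Rstar‖ < 1 := by rw [matCLM_norm]; exact hnorm
  obtain ⟨U, hUval⟩ := isUnit_one_sub_of_norm_lt_one hnormR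
  set Bm : Matrix (Fin q) (Fin q) ℝ := (matCLM q q).symm ↑U⁻¹ with hBm
  have hBmul : (1 - Rstar) * Bm = 1 := by
    apply (matCLM q q).injective
    rw [matCLM_mul, matCLM_one]
    have h1 : matCLM q q (1 - Rstar) = 1 - matCLM q q Rstar := by
      rw [map_sub, matCLM_one]
    rw [h1, hBm, LinearEquiv.apply_symm_apply, ← hUval]
    exact U.mul_inv
  have hdet : IsUnit (1 - Rstar).det := by
    apply IsUnit.of_mul_eq_one Bm.det
    rw [← Matrix.det_mul, hBmul, Matrix.det_one]
  have hfix : bstar + Rstar * xstar = xstar := by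
    have h1 : (1 - Rstar) * xstar = bstar := by
      rw [hxstar, ← Matrix.mul_assoc, Matrix.mul_nonsing_inv _ hdet, Matrix.one_mul]
    have h2 : xstar - Rstar * xstar = bstar := by
      rw [← h1]; rw [Matrix.sub_mul, Matrix.one_mul]
    linear_combination (norm := abel) h2.symm
  -- contraction constant
  have hnn : (0 : ℝ) ≤ opNorm2 Rstar := by
    rw [← matCLM_norm]; exact norm_nonneg _
  set r : ℝ := (1 + opNorm2 Rstar) / 2 with hr
  have hr0 : 0 ≤ r := by positivity
  have hr1 : r < 1 := by rw [hr]; linarith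
  have hRr : opNorm2 Rstar < r := by rw [hr]; linarith
  -- eventual bound on opNorm2 (R t)
  have htn : Tendsto (fun t => ‖matCLM q q (R t)‖) atTop (𝓝 ‖matCLM q q Rstar‖) :=
    ((continuous_norm.comp (matCLM_continuous q q)).tendsto Rstar).comp hR
  have hbound : ∀ᶠ t in atTop, opNorm2 (R t) < r := by
    have := htn.eventually_lt_const (by rw [matCLM_norm]; exact hRr)
    filter_upwards [this] with t ht
    rw [← matCLM_norm]; exact ht
  -- perturbation sequence
  set ε : ℕ → ℝ := fun t =>
    ‖matCLM q p (b t - bstar)‖ + ‖matCLM q p ((R t - Rstar) * xstar)‖ with hε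
  have hε0 : Tendsto ε atTop (𝓝 0) := by
    have c1 : Continuous fun M : Matrix (Fin q) (Fin p) ℝ => ‖matCLM q p (M - bstar)‖ :=
      continuous_norm.comp ((matCLM_continuous q p).comp (continuous_id.sub continuous_const))
    have c2 : Continuous fun M : Matrix (Fin q) (Fin q) ℝ =>
        ‖matCLM q p ((M - Rstar) * xstar)‖ := by
      apply continuous_norm.comp
      apply (matCLM_continuous q p).comp
      exact (continuous_id.sub continuous_const).matrix_mul continuous_const
    have h1 := (c1.tendsto bstar).comp hb
    have h2 := (c2.tendsto Rstar).comp hR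
    simp only [Function.comp_def] at h1 h2
    rw [sub_self, map_zero, norm_zero] at h1
    rw [sub_self, Matrix.zero_mul, map_zero, norm_zero] at h2
    rw [hε]
    simpa using h1.add h2
  -- the error sequence
  set u : ℕ → ℝ := fun t => ‖matCLM q p (x t - xstar)‖ with hu
  have hunn : ∀ t, 0 ≤ u t := fun t => norm_nonneg _
  have hrec : ∀ᶠ t in atTop, u (t + 1) ≤ ε (t + 1) + r * u t := by
    obtain ⟨N, hN⟩ := eventually_atTop.mp hbound
    filter_upwards [eventually_ge_atTop 1, eventually_ge_atTop N] with t ht1 htN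
    have hRb : opNorm2 (R (t + 1)) ≤ r := (hN (t + 1) (by omega)).le
    have hid : x (t + 1) - xstar =
        (b (t + 1) - bstar) + ((R (t + 1) - Rstar) * xstar)
          + (R (t + 1) * (x t - xstar)) := by
      calc x (t + 1) - xstar = b (t + 1) + R (t + 1) * x t - (bstar + Rstar * xstar) := by
            rw [hx t ht1, hfix]
        _ = _ := by rw [Matrix.mul_sub, Matrix.sub_mul]; abel
    have hle1 : u (t + 1) ≤ ‖matCLM q p (b (t + 1) - bstar)‖
        + ‖matCLM q p ((R (t + 1) - Rstar) * xstar)‖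
        + ‖matCLM q p (R (t + 1) * (x t - xstar))‖ := by
      rw [hu]
      simp only [hid, map_add]
      exact norm_add₃_le
    have hle2 : ‖matCLM q p (R (t + 1) * (x t - xstar))‖ ≤ r * u t := by
      rw [matCLM_mul]
      calc ‖(matCLM q q (R (t + 1))).comp (matCLM q p (x t - xstar))‖
          ≤ ‖matCLM q q (R (t + 1))‖ * ‖matCLM q p (x t - xstar)‖ :=
            ContinuousLinearMap.opNorm_comp_le _ _
        _ ≤ r * u t := by
            rw [matCLM_norm]
            exact mul_le_mul_of_nonneg_right hRb (norm_nonneg _)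
    calc u (t + 1) ≤ _ := hle1
      _ ≤ ε (t + 1) + r * u t := by rw [hε]; dsimp only; linarith
  have hu0 : Tendsto u atTop (𝓝 0) := geom_decay hr0 hr1 u ε hunn hε0 hrec
  have hΦ0 : Tendsto (fun t => matCLM q p (x t - xstar)) atTop (𝓝 0) :=
    tendsto_zero_iff_norm_tendsto_zero.mpr hu0
  have hsub : Tendsto (fun t => x t - xstar) atTop (𝓝 0) := by
    have h := ((matCLM_symm_continuous q p).tendsto 0).comp hΦ0
    simp only [Function.comp_def] at h
    rw [map_zero] at h
    have heq : (fun t => (matCLM q p).symm (matCLM q p (x t - xstar)))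
        = fun t => x t - xstar := by
      funext t
      exact (matCLM q p).symm_apply_apply _
    rwa [heq] at h
  exact tendsto_sub_nhds_zero_iff.mp hsub
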